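/- arXiv:1511.00793 — 2 statements merged into one kernel-verified Lean document; each statement's English description precedes it below -/
import Mathlib

section
/- Let φ = (φ_1,…,φ_n) be an n-tuple of formal power series over a field F with zero constant terms whose linear part is in Jordan canonical form with eigenvalues λ_1,…,λ_n. Suppose each λ_i for i = 1,…,r does not lie in the multiplicative semigroup generated by λ_{r+1},…,λ_n (i.e. λ_i ≠ λ_{r+1}^{α_{r+1}}⋯λ_n^{α_n} for all nonnegative integers α_j with at least one α_j > 0). Then there exist unique formal power series f_1,…,f_r ∈ F[[x_{r+1},…,x_n]] with zero constant and linear terms such that the formal subvariety defined by x_i = f_i(x_{r+1},…,x_n) for i = 1,…,r is invariant under φ, meaning φ_i(x) = f_i(φ_{r+1}(x),…,φ_n(x)) holds identically when each x_i is substituted by f_i. -/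
/-- Substitution of the tuple `g` into the multivariate power series `f`; this gives
the composite `f(g₁,…,gₙ)` whenever each `gᵢ` has zero constant term. -/
noncomputable def mvComp {F : Type*} [CommRing F] {n : ℕ}
    (f : MvPowerSeries (Fin n) F) (g : Fin n → MvPowerSeries (Fin n) F) :
    MvPowerSeries (Fin n) F :=
  fun d =>
    ∑ e ∈ Finset.Iic (Finsupp.equivFunOnFinite.symm fun _ => d.sum fun _ v => v),
      MvPowerSeries.coeff e f * MvPowerSeries.coeff d (∏ i, (g i) ^ (e i))

namespace Stmt14aux

open MvPowerSeries Finsupp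

variable {F : Type*} [Field F] {n : ℕ}

/-- total degree of a monomial exponent -/
def deg {n : ℕ} (d : Fin n →₀ ℕ) : ℕ := ∑ j, d j

/-- weight of a monomial exponent -/
def wt {n : ℕ} (d : Fin n →₀ ℕ) : ℕ := ∑ j : Fin n, (j : ℕ) * d j

lemma deg_add (a b : Fin n →₀ ℕ) : deg (a + b) = deg a + deg b := by
  simp [deg, Finset.sum_add_distrib]

lemma wt_add (a b : Fin n →₀ ℕ) : wt (a + b) = wt a + wt b := by
  simp [wt, Finset.sum_add_distrib, Nat.mul_add]

@[simp] lemma deg_zero : deg (0 : Fin n →₀ ℕ) = 0 := by simp [deg]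

@[simp] lemma deg_single (j : Fin n) (k : ℕ) : deg (Finsupp.single j k) = k := by
  simp [deg, Finsupp.single_apply]

@[simp] lemma wt_single (j : Fin n) (k : ℕ) : wt (Finsupp.single j k) = (j : ℕ) * k := by
  rw [wt, Finset.sum_eq_single j] <;> simp +contextual [Finsupp.single_apply, eq_comm]

lemma deg_eq_zero_iff {d : Fin n →₀ ℕ} : deg d = 0 ↔ d = 0 := by
  constructor
  · intro h
    ext j
    have := Finset.sum_eq_zero_iff.mp h j (Finset.mem_univ j)
    simpa using this
  · rintro rfl; simp

lemma le_deg (d : Fin n →₀ ℕ) (j : Fin n) : d j ≤ deg d :=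
  Finset.single_le_sum (fun _ _ => Nat.zero_le _) (Finset.mem_univ j)

lemma wt_le (d : Fin n →₀ ℕ) : wt d ≤ n * deg d := by
  calc wt d ≤ ∑ j : Fin n, n * d j :=
        Finset.sum_le_sum fun j _ => Nat.mul_le_mul_right _ (le_of_lt j.isLt)
    _ = n * deg d := by rw [deg, Finset.mul_sum]

lemma deg_finsuppSum (d : Fin n →₀ ℕ) : (d.sum fun _ v => v) = deg d := by
  rw [Finsupp.sum_fintype]; · rfl
  · intro; rfl

lemma mem_Iic_deg {d e : Fin n →₀ ℕ} :
    e ∈ Finset.Iic (Finsupp.equivFunOnFinite.symm fun _ => d.sum fun _ v => v) ↔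
      ∀ j, e j ≤ deg d := by
  rw [Finset.mem_Iic, Finsupp.le_def]
  simp [deg_finsuppSum]

lemma coeff_mvComp [DecidableEq (Fin n)] (f : MvPowerSeries (Fin n) F)
    (g : Fin n → MvPowerSeries (Fin n) F) (d : Fin n →₀ ℕ) :
    MvPowerSeries.coeff d (mvComp f g) =
      ∑ e ∈ Finset.Iic (Finsupp.equivFunOnFinite.symm fun _ => d.sum fun _ v => v),
        MvPowerSeries.coeff e f * MvPowerSeries.coeff d (∏ i, (g i) ^ (e i)) := rfl

lemma exists_single_of_deg_one {e : Fin n →₀ ℕ} (h : deg e = 1) :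
    ∃ j : Fin n, e = Finsupp.single j 1 := by
  obtain ⟨j, hj⟩ : ∃ j, e j ≠ 0 := by
    by_contra hc
    push_neg at hc
    rw [deg_eq_zero_iff.mpr (Finsupp.ext fun j => hc j)] at h
    simp at h
  refine ⟨j, Finsupp.ext fun k => ?_⟩
  have h1 : e j = 1 := le_antisymm (h ▸ le_deg e j) (Nat.one_le_iff_ne_zero.mpr hj)
  rcases eq_or_ne k j with rfl | hk
  · simpa [Finsupp.single_apply] using h1
  · have hsub : e j + e k ≤ deg e := by
      have := Finset.sum_le_sum_of_subset (f := fun x => e x) (Finset.subset_univ {j, k})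
      rwa [Finset.sum_pair (Ne.symm hk)] at this
    have : e k = 0 := by omega
    rw [this, Finsupp.single_apply, if_neg (Ne.symm hk)]

lemma prod_pow_zero {M : Type*} [CommMonoid M] (u : Fin n → M) :
    ∏ j, u j ^ ((0 : Fin n →₀ ℕ) j) = 1 := by simp

lemma prod_pow_single_add {M : Type*} [CommMonoid M] (u : Fin n → M) {j₀ : Fin n}
    {e e' : Fin n →₀ ℕ} (hee : e = Finsupp.single j₀ 1 + e') :
    ∏ j, u j ^ (e j) = u j₀ * ∏ j, u j ^ (e' j) := by
  have key : ∀ j : Fin n, u j ^ (e j)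
      = (if j = j₀ then u j₀ else 1) * u j ^ (e' j) := by
    intro j
    have : e j = (if j = j₀ then 1 else 0) + e' j := by
      rw [hee, Finsupp.add_apply, Finsupp.single_apply]
      simp [eq_comm]
    rw [this]
    rcases eq_or_ne j j₀ with rfl | hj
    · rw [if_pos rfl, if_pos rfl, pow_add, pow_one, mul_comm]
    · rw [if_neg hj, if_neg hj, zero_add, one_mul]
  rw [Finset.prod_congr rfl (fun j _ => key j), Finset.prod_mul_distrib,
    Finset.prod_ite_eq' Finset.univ j₀ (fun _ => u j₀)]
  simp

lemma decomp {e : Fin n →₀ ℕ} {j₀ : Fin n} (h : e j₀ ≠ 0) :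
    ∃ e' : Fin n →₀ ℕ, e = Finsupp.single j₀ 1 + e' := by
  refine ⟨e - Finsupp.single j₀ 1, Finsupp.ext fun k => ?_⟩
  rcases eq_or_ne k j₀ with rfl | hk
  · simp [Finsupp.single_apply, Finsupp.tsub_apply]
    omega
  · simp [Finsupp.single_apply, Ne.symm hk, Finsupp.tsub_apply]

/-- order lemma : a product of `deg e` many series with zero constant term has no
coefficients below degree `deg e`. -/
lemma ord_lemma (u : Fin n → MvPowerSeries (Fin n) F)
    (h0 : ∀ j, MvPowerSeries.coeff 0 (u j) = 0) :
    ∀ s (e : Fin n →₀ ℕ), deg e = s → ∀ d : Fin n →₀ ℕ, deg d < s →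
      MvPowerSeries.coeff d (∏ j, u j ^ (e j)) = 0 := by
  classical
  intro s
  induction s with
  | zero => intro e he d hd; omega
  | succ s ih =>
    intro e he d hd
    obtain ⟨j₀, hj₀⟩ : ∃ j₀, e j₀ ≠ 0 := by
      by_contra hc; push_neg at hc
      rw [deg_eq_zero_iff.mpr (Finsupp.ext fun j => hc j)] at he; omega
    obtain ⟨e', hee⟩ := decomp hj₀
    have he' : deg e' = s := by rw [hee, deg_add, deg_single] at he; omega
    rw [prod_pow_single_add u hee, MvPowerSeries.coeff_mul]
    refine Finset.sum_eq_zero fun p hp => ?_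
    rw [Finset.HasAntidiagonal.mem_antidiagonal] at hp
    rcases eq_or_ne p.1 0 with h1 | h1
    · rw [h1, h0, zero_mul]
    · have hda : deg p.1 ≠ 0 := fun hc => h1 (deg_eq_zero_iff.mp hc)
      have : deg p.2 < s := by
        have := deg_add p.1 p.2
        rw [hp] at this
        omega
      rw [ih e' he' p.2 this, mul_zero]

/-- coefficients of a product only depend on low-degree coefficients of the factors. -/
lemma prod_agree (u v : Fin n → MvPowerSeries (Fin n) F)
    (hu : ∀ j, MvPowerSeries.coeff 0 (u j) = 0)
    (hv : ∀ j, MvPowerSeries.coeff 0 (v j) = 0) :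
    ∀ s, 1 ≤ s → ∀ (e : Fin n →₀ ℕ), deg e = s → ∀ d : Fin n →₀ ℕ,
      (∀ (j : Fin n) (a : Fin n →₀ ℕ), deg a + s ≤ deg d + 1 →
        MvPowerSeries.coeff a (u j) = MvPowerSeries.coeff a (v j)) →
      MvPowerSeries.coeff d (∏ j, u j ^ (e j)) =
        MvPowerSeries.coeff d (∏ j, v j ^ (e j)) := by
  classical
  intro s
  induction s with
  | zero => omega
  | succ s ih =>
    intro _ e he d hagree
    obtain ⟨j₀, hj₀⟩ : ∃ j₀, e j₀ ≠ 0 := by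
      by_contra hc; push_neg at hc
      rw [deg_eq_zero_iff.mpr (Finsupp.ext fun j => hc j)] at he; omega
    obtain ⟨e', hee⟩ := decomp hj₀
    have he' : deg e' = s := by rw [hee, deg_add, deg_single] at he; omega
    rcases Nat.eq_zero_or_pos s with rfl | hs
    · -- single factor
      have h0' : e' = 0 := deg_eq_zero_iff.mp he'
      subst h0'
      rw [prod_pow_single_add u hee, prod_pow_single_add v hee]
      simp only [prod_pow_zero, mul_one]
      exact hagree j₀ d (by omega)
    · rw [prod_pow_single_add u hee, prod_pow_single_add v hee,
        MvPowerSeries.coeff_mul, MvPowerSeries.coeff_mul]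
      refine Finset.sum_congr rfl fun p hp => ?_
      rw [Finset.HasAntidiagonal.mem_antidiagonal] at hp
      rcases eq_or_ne p.1 0 with h1 | h1
      · rw [h1, hu, hv, zero_mul, zero_mul]
      · have hda : 1 ≤ deg p.1 := by
          rcases Nat.eq_zero_or_pos (deg p.1) with hc | hc
          · exact absurd (deg_eq_zero_iff.mp hc) h1
          · exact hc
        have hsum : deg p.1 + deg p.2 = deg d := by rw [← deg_add, hp]
        rcases lt_or_ge (deg p.2) s with hlt | hge
        · rw [ord_lemma u hu s e' he' p.2 hlt, ord_lemma v hv s e' he' p.2 hlt,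
            mul_zero, mul_zero]
        · have h2 : MvPowerSeries.coeff p.1 (u j₀) = MvPowerSeries.coeff p.1 (v j₀) :=
            hagree j₀ p.1 (by omega)
          have h3 := ih hs e' he' p.2 (fun j a ha => hagree j a (by omega))
          rw [h2, h3]

/-- products of series supported on variables `≥ r` are supported on variables `≥ r`. -/
lemma prod_vars {r : ℕ} (u : Fin n → MvPowerSeries (Fin n) F)
    (hs : ∀ (j : Fin n) (a : Fin n →₀ ℕ), (∃ k : Fin n, (k : ℕ) < r ∧ a k ≠ 0) →
      MvPowerSeries.coeff a (u j) = 0) :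
    ∀ s (e : Fin n →₀ ℕ), deg e = s → ∀ d : Fin n →₀ ℕ,
      (∃ k : Fin n, (k : ℕ) < r ∧ d k ≠ 0) →
      MvPowerSeries.coeff d (∏ j, u j ^ (e j)) = 0 := by
  classical
  intro s
  induction s with
  | zero =>
    intro e he d hd
    rw [deg_eq_zero_iff.mp he, prod_pow_zero, MvPowerSeries.coeff_one, if_neg]
    rintro rfl
    obtain ⟨k, -, hk⟩ := hd
    simp at hk
  | succ s ih =>
    intro e he d hd
    obtain ⟨j₀, hj₀⟩ : ∃ j₀, e j₀ ≠ 0 := by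
      by_contra hc; push_neg at hc
      rw [deg_eq_zero_iff.mpr (Finsupp.ext fun j => hc j)] at he; omega
    obtain ⟨e', hee⟩ := decomp hj₀
    have he' : deg e' = s := by rw [hee, deg_add, deg_single] at he; omega
    rw [prod_pow_single_add u hee, MvPowerSeries.coeff_mul]
    refine Finset.sum_eq_zero fun p hp => ?_
    rw [Finset.HasAntidiagonal.mem_antidiagonal] at hp
    obtain ⟨k, hkr, hk⟩ := hd
    have : p.1 k ≠ 0 ∨ p.2 k ≠ 0 := by
      by_contra hc; push_neg at hc
      have := congrArg (fun x : Fin n →₀ ℕ => x k) hp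
      simp only [Finsupp.add_apply] at this
      omega
    rcases this with h | h
    · rw [hs j₀ p.1 ⟨k, hkr, h⟩, zero_mul]
    · rw [ih e' he' p.2 ⟨k, hkr, h⟩, mul_zero]

/-- the linear series with coefficients `B j ·`. -/
noncomputable def lin (B : Fin n → Fin n → F) (j : Fin n) : MvPowerSeries (Fin n) F :=
  ∑ k : Fin n, MvPowerSeries.monomial (Finsupp.single k 1) (B j k)

lemma coeff_lin [DecidableEq (Fin n)] (B : Fin n → Fin n → F) (j : Fin n) (a : Fin n →₀ ℕ) :
    MvPowerSeries.coeff a (lin B j) =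
      ∑ k : Fin n, if a = Finsupp.single k 1 then B j k else 0 := by
  rw [lin, map_sum]
  exact Finset.sum_congr rfl fun k _ => MvPowerSeries.coeff_monomial _ _ _

lemma coeff_lin_zero (B : Fin n → Fin n → F) :
    ∀ j, MvPowerSeries.coeff 0 (lin B j) = 0 := by
  classical
  intro j
  rw [coeff_lin]
  refine Finset.sum_eq_zero fun k _ => if_neg fun hc => ?_
  have := congrArg deg hc
  simp at this

lemma coeff_lin_single [DecidableEq (Fin n)] (B : Fin n → Fin n → F) (j k : Fin n) :
    MvPowerSeries.coeff (Finsupp.single k 1) (lin B j) = B j k := by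
  rw [coeff_lin, Finset.sum_eq_single k]
  · rw [if_pos rfl]
  · intro k' _ hk'
    exact if_neg fun hc => hk' ((Finsupp.single_left_inj (one_ne_zero)).mp hc.symm)
  · simp

lemma coeff_lin_ne (B : Fin n → Fin n → F)
    (hB : ∀ j k : Fin n, (k : ℕ) ≠ (j : ℕ) → (k : ℕ) ≠ (j : ℕ) + 1 → B j k = 0)
    {j : Fin n} {a : Fin n →₀ ℕ} (h : MvPowerSeries.coeff a (lin B j) ≠ 0) :
    ∃ k : Fin n, a = Finsupp.single k 1 ∧ B j k ≠ 0 ∧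
      ((k : ℕ) = (j : ℕ) ∨ (k : ℕ) = (j : ℕ) + 1) := by
  classical
  rw [coeff_lin] at h
  obtain ⟨k, -, hk⟩ := Finset.exists_ne_zero_of_sum_ne_zero h
  rw [ne_eq, ite_eq_right_iff, not_forall] at hk
  obtain ⟨ha, hBk⟩ := hk
  refine ⟨k, ha, hBk, ?_⟩
  by_contra hc
  push_neg at hc
  exact hBk (hB j k hc.1 hc.2)

/-- triangularity: coefficients of products of Jordan linear forms vanish unless the
weight strictly increases or the monomial is unchanged. -/
lemma triang₁ (B : Fin n → Fin n → F)
    (hB : ∀ j k : Fin n, (k : ℕ) ≠ (j : ℕ) → (k : ℕ) ≠ (j : ℕ) + 1 → B j k = 0) :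
    ∀ s (e : Fin n →₀ ℕ), deg e = s → ∀ d : Fin n →₀ ℕ,
      MvPowerSeries.coeff d (∏ j, (lin B j) ^ (e j)) ≠ 0 →
      wt e < wt d ∨ d = e := by
  classical
  intro s
  induction s with
  | zero =>
    intro e he d hne
    rw [deg_eq_zero_iff.mp he] at *
    rw [prod_pow_zero, MvPowerSeries.coeff_one] at hne
    right
    by_contra hc
    rw [if_neg hc] at hne
    exact hne rfl
  | succ s ih =>
    intro e he d hne
    obtain ⟨j₀, hj₀⟩ : ∃ j₀, e j₀ ≠ 0 := by
      by_contra hc; push_neg at hc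
      rw [deg_eq_zero_iff.mpr (Finsupp.ext fun j => hc j)] at he; omega
    obtain ⟨e', hee⟩ := decomp hj₀
    have he' : deg e' = s := by rw [hee, deg_add, deg_single] at he; omega
    rw [prod_pow_single_add _ hee, MvPowerSeries.coeff_mul] at hne
    obtain ⟨p, hp, hpne⟩ := Finset.exists_ne_zero_of_sum_ne_zero hne
    rw [Finset.HasAntidiagonal.mem_antidiagonal] at hp
    obtain ⟨k, hak, -, hk⟩ := coeff_lin_ne B hB (left_ne_zero_of_mul hpne)
    have h2 := ih e' he' p.2 (right_ne_zero_of_mul hpne)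
    have hwd : wt d = (k : ℕ) + wt p.2 := by
      rw [← hp, wt_add, hak, wt_single, mul_one]
    have hwe : wt e = (j₀ : ℕ) + wt e' := by
      rw [hee, wt_add, wt_single, mul_one]
    rcases hk with hk | hk
    · have hkj : k = j₀ := Fin.ext hk
      rcases h2 with h2 | h2
      · left; omega
      · right
        rw [← hp, hak, hkj, h2, hee]
    · have hle : wt e' ≤ wt p.2 := by
        rcases h2 with h2 | h2
        · omega
        · rw [h2]
      left; omega

/-- diagonal coefficient of the product of Jordan linear forms. -/
lemma triang₂ (B : Fin n → Fin n → F)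
    (hB : ∀ j k : Fin n, (k : ℕ) ≠ (j : ℕ) → (k : ℕ) ≠ (j : ℕ) + 1 → B j k = 0) :
    ∀ s (e : Fin n →₀ ℕ), deg e = s →
      MvPowerSeries.coeff e (∏ j, (lin B j) ^ (e j)) = ∏ j, (B j j) ^ (e j) := by
  classical
  intro s
  induction s with
  | zero =>
    intro e he
    rw [deg_eq_zero_iff.mp he, prod_pow_zero, prod_pow_zero, MvPowerSeries.coeff_one, if_pos rfl]
  | succ s ih =>
    intro e he
    obtain ⟨j₀, hj₀⟩ : ∃ j₀, e j₀ ≠ 0 := by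
      by_contra hc; push_neg at hc
      rw [deg_eq_zero_iff.mpr (Finsupp.ext fun j => hc j)] at he; omega
    obtain ⟨e', hee⟩ := decomp hj₀
    have he' : deg e' = s := by rw [hee, deg_add, deg_single] at he; omega
    rw [prod_pow_single_add _ hee, MvPowerSeries.coeff_mul,
      prod_pow_single_add (fun j => B j j) hee, ← ih e' he']
    rw [Finset.sum_eq_single (Finsupp.single j₀ 1, e')]
    · rw [coeff_lin_single]
    · rintro ⟨a, b⟩ hab hne
      rw [Finset.HasAntidiagonal.mem_antidiagonal] at hab
      by_contra hc
      have ha : MvPowerSeries.coeff a (lin B j₀) ≠ 0 := left_ne_zero_of_mul hc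
      have hb : MvPowerSeries.coeff b (∏ j, (lin B j) ^ (e' j)) ≠ 0 :=
        right_ne_zero_of_mul hc
      obtain ⟨k, hak, -, hk⟩ := coeff_lin_ne B hB ha
      have h2 := triang₁ B hB s e' he' b hb
      have hwe : wt e = (k : ℕ) + wt b := by
        rw [← hab, wt_add, hak, wt_single, mul_one]
      have hwe' : wt e = (j₀ : ℕ) + wt e' := by
        rw [hee, wt_add, wt_single, mul_one]
      rcases hk with hk | hk
      · have hkj : k = j₀ := Fin.ext hk
        rcases h2 with h2 | h2
        · omega
        · exact hne (by rw [Prod.ext_iff]; exact ⟨by simp [hak, hkj], h2⟩)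
      · have hle : wt e' ≤ wt b := by
          rcases h2 with h2 | h2
          · omega
          · rw [h2]
        omega
    · intro hc
      exact absurd (Finset.HasAntidiagonal.mem_antidiagonal.mpr hee.symm) hc

/-- the shape conditions on the candidate tuples. -/
def Sgood (r : ℕ) (f : Fin n → MvPowerSeries (Fin n) F) : Prop :=
  (∀ i : Fin n, (i : ℕ) < r →
      MvPowerSeries.coeff 0 (f i) = 0 ∧
      (∀ j : Fin n, MvPowerSeries.coeff (Finsupp.single j 1) (f i) = 0) ∧
      (∀ d : Fin n →₀ ℕ, (∃ j : Fin n, (j : ℕ) < r ∧ d j ≠ 0) →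
        MvPowerSeries.coeff d (f i) = 0)) ∧
  (∀ i : Fin n, r ≤ (i : ℕ) → f i = MvPowerSeries.X i)

variable {r : ℕ}

lemma Sgood.const0 {f : Fin n → MvPowerSeries (Fin n) F} (hf : Sgood r f) (j : Fin n) :
    MvPowerSeries.coeff 0 (f j) = 0 := by
  rcases lt_or_ge (j : ℕ) r with h | h
  · exact (hf.1 j h).1
  · rw [hf.2 j h]; exact MvPowerSeries.coeff_zero_X j

lemma Sgood.lin {f : Fin n → MvPowerSeries (Fin n) F} (hf : Sgood r f) (j k : Fin n) :
    MvPowerSeries.coeff (Finsupp.single k 1) (f j) =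
      if (j : ℕ) < r then 0 else (if k = j then 1 else 0) := by
  classical
  rcases lt_or_ge (j : ℕ) r with h | h
  · rw [if_pos h]; exact (hf.1 j h).2.1 k
  · rw [if_neg (not_lt.mpr h), hf.2 j h, MvPowerSeries.coeff_X]
    by_cases hkj : k = j
    · subst hkj; simp
    · rw [if_neg hkj, if_neg fun hc => hkj ((Finsupp.single_left_inj one_ne_zero).mp hc)]

lemma Sgood.touch {f : Fin n → MvPowerSeries (Fin n) F} (hf : Sgood r f) (j : Fin n)
    (d : Fin n →₀ ℕ) (hd : ∃ k : Fin n, (k : ℕ) < r ∧ d k ≠ 0) :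
    MvPowerSeries.coeff d (f j) = 0 := by
  classical
  rcases lt_or_ge (j : ℕ) r with h | h
  · exact (hf.1 j h).2.2 d hd
  · rw [hf.2 j h, MvPowerSeries.coeff_X, if_neg]
    rintro rfl
    obtain ⟨k, hk, hk0⟩ := hd
    rw [Finsupp.single_apply, if_neg] at hk0
    · exact hk0 rfl
    · rintro rfl; omega

/-- constant coefficient of a composite. -/
lemma mvComp_coeff_zero (h : MvPowerSeries (Fin n) F) (u : Fin n → MvPowerSeries (Fin n) F) :
    MvPowerSeries.coeff 0 (mvComp h u) = MvPowerSeries.coeff 0 h := by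
  classical
  rw [coeff_mvComp]
  rw [Finset.sum_eq_single_of_mem 0 (mem_Iic_deg.mpr (by simp))]
  · rw [prod_pow_zero, MvPowerSeries.coeff_one, if_pos rfl, mul_one]
  · intro e he hne
    rw [mem_Iic_deg] at he
    simp only [deg_zero, Nat.le_zero] at he
    exact absurd (Finsupp.ext fun j => he j) hne

/-- a composite with series in the variables `≥ r` is a series in the variables `≥ r`. -/
lemma mvComp_touch (h : MvPowerSeries (Fin n) F) (u : Fin n → MvPowerSeries (Fin n) F)
    (hu : ∀ (j : Fin n) (a : Fin n →₀ ℕ), (∃ k : Fin n, (k : ℕ) < r ∧ a k ≠ 0) →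
      MvPowerSeries.coeff a (u j) = 0)
    (d : Fin n →₀ ℕ) (hd : ∃ k : Fin n, (k : ℕ) < r ∧ d k ≠ 0) :
    MvPowerSeries.coeff d (mvComp h u) = 0 := by
  classical
  rw [coeff_mvComp]
  refine Finset.sum_eq_zero fun e _ => ?_
  rw [prod_vars u hu (deg e) e rfl d hd, mul_zero]

/-- locality: a coefficient of a composite only depends on the coefficients of the
substituted tuple up to the same degree. -/
lemma mvComp_loc (h : MvPowerSeries (Fin n) F) (u v : Fin n → MvPowerSeries (Fin n) F)
    (hu : ∀ j, MvPowerSeries.coeff 0 (u j) = 0)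
    (hv : ∀ j, MvPowerSeries.coeff 0 (v j) = 0)
    (d : Fin n →₀ ℕ)
    (hagree : ∀ (j : Fin n) (a : Fin n →₀ ℕ), deg a ≤ deg d →
      MvPowerSeries.coeff a (u j) = MvPowerSeries.coeff a (v j)) :
    MvPowerSeries.coeff d (mvComp h u) = MvPowerSeries.coeff d (mvComp h v) := by
  classical
  rw [coeff_mvComp, coeff_mvComp]
  refine Finset.sum_congr rfl fun e _ => ?_
  rcases Nat.eq_zero_or_pos (deg e) with h0 | h0
  · rw [deg_eq_zero_iff.mp h0, prod_pow_zero, prod_pow_zero]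
  · rw [prod_agree u v hu hv (deg e) h0 e rfl d fun j a ha => hagree j a (by omega)]

lemma prod_pow_single {M : Type*} [CommMonoid M] (u : Fin n → M) (k : Fin n) :
    ∏ j, u j ^ ((Finsupp.single k (1 : ℕ)) j) = u k := by
  rw [prod_pow_single_add u
    (show (Finsupp.single k 1 : Fin n →₀ ℕ) = Finsupp.single k 1 + 0 from (add_zero _).symm),
    prod_pow_zero, mul_one]

/-- linear coefficients of a composite `h(f)`. -/
lemma psi_lin {f : Fin n → MvPowerSeries (Fin n) F} (hf : Sgood r f)
    (h : MvPowerSeries (Fin n) F) (k : Fin n) :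
    MvPowerSeries.coeff (Finsupp.single k 1) (mvComp h f) =
      (if r ≤ (k : ℕ) then MvPowerSeries.coeff (Finsupp.single k 1) h else 0) := by
  classical
  rw [coeff_mvComp]
  have hd1 : deg (Finsupp.single k 1) = 1 := deg_single k 1
  rw [Finset.sum_eq_single_of_mem (Finsupp.single k 1)
      (mem_Iic_deg.mpr (fun j' => by
        rw [hd1, Finsupp.single_apply]; split <;> omega))]
  · rw [prod_pow_single, hf.lin k k, if_pos rfl]
    rcases lt_or_ge (k : ℕ) r with hk | hk
    · rw [if_pos hk, if_neg (not_le.mpr hk), mul_zero]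
    · rw [if_neg (not_lt.mpr hk), if_pos hk, mul_one]
  · intro e he hne
    rcases Nat.lt_or_ge (deg e) 2 with h2 | h2
    · interval_cases hde : deg e
      · rw [deg_eq_zero_iff.mp hde, prod_pow_zero, MvPowerSeries.coeff_one,
          if_neg (fun hc => one_ne_zero (Finsupp.single_eq_zero.mp hc)), mul_zero]
      · obtain ⟨j', rfl⟩ := exists_single_of_deg_one hde
        have hj' : j' ≠ k := fun hc => hne (hc ▸ rfl)
        rw [prod_pow_single, hf.lin j' k, ]
        split
        · rw [mul_zero]
        · rw [if_neg (Ne.symm hj'), mul_zero]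
    · rw [ord_lemma f hf.const0 (deg e) e rfl _ (by omega), mul_zero]


/-- the well-founded measure used to solve for the coefficients. -/
def nu (n r : ℕ) (i : ℕ) (d : Fin n →₀ ℕ) : ℕ :=
  (n + 2) * (n * deg d + 1) * deg d + (r - i) * (n * deg d + 1) + wt d

lemma nuA (hr : r ≤ n) {i j : ℕ} {d e : Fin n →₀ ℕ} (h : deg e < deg d) :
    nu n r j e < nu n r i d := by
  have hwe : wt e < n * deg e + 1 := by have := wt_le e; omega
  have hrj : (r - j) * (n * deg e + 1) ≤ n * (n * deg e + 1) :=
    Nat.mul_le_mul_right _ (by omega)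
  have h1 : nu n r j e < (n + 2) * (n * deg e + 1) * (deg e + 1) := by
    have expand : (n + 2) * (n * deg e + 1) * (deg e + 1)
        = (n + 2) * (n * deg e + 1) * deg e + (n * (n * deg e + 1)
          + (n * deg e + 1) + (n * deg e + 1)) := by ring
    rw [nu, expand]
    omega
  have h2 : (n + 2) * (n * deg e + 1) * (deg e + 1) ≤ (n + 2) * (n * deg d + 1) * deg d :=
    Nat.mul_le_mul (Nat.mul_le_mul le_rfl (by have : deg e ≤ deg d := by omega
                                              have := Nat.mul_le_mul_left n this
                                              omega)) (by omega)
  have h3 : (n + 2) * (n * deg d + 1) * deg d ≤ nu n r i d := by rw [nu]; omega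
  omega

lemma nuB {i j : ℕ} {d : Fin n →₀ ℕ} (hij : i < j) (hjr : j ≤ r) :
    nu n r j d < nu n r i d := by
  rw [nu, nu]
  have h1 : r - j < r - i := by omega
  have : (r - j) * (n * deg d + 1) + (n * deg d + 1) ≤ (r - i) * (n * deg d + 1) := by
    calc (r - j) * (n * deg d + 1) + (n * deg d + 1) = (r - j + 1) * (n * deg d + 1) := by ring
      _ ≤ (r - i) * (n * deg d + 1) := Nat.mul_le_mul_right _ (by omega)
  omega

lemma nuC {i : ℕ} {d e : Fin n →₀ ℕ} (hdeg : deg e = deg d) (hwt : wt e < wt d) :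
    nu n r i e < nu n r i d := by
  rw [nu, nu, hdeg]
  omega

/-- the eigenvalue monomial `λ^d`. -/
def Lam (l : Fin n → F) (d : Fin n →₀ ℕ) : F := ∏ j, l j ^ (d j)

/-- the `d`-th coefficient of the invariance equation for the `i`-th series. -/
noncomputable def Ecoef (φ : Fin n → MvPowerSeries (Fin n) F) (i : Fin n) (d : Fin n →₀ ℕ)
    (f : Fin n → MvPowerSeries (Fin n) F) : F :=
  MvPowerSeries.coeff d (mvComp (φ i) f) -
    MvPowerSeries.coeff d (mvComp (f i) (fun j => mvComp (φ j) f))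

/-- the matrix of the linear part of `φ` with the first `r` columns deleted. -/
noncomputable def Bmat (r : ℕ) (φ : Fin n → MvPowerSeries (Fin n) F) : Fin n → Fin n → F :=
  fun j k => if r ≤ (k : ℕ) then MvPowerSeries.coeff (Finsupp.single k 1) (φ j) else 0

/-- Key comparison lemma: modulo strictly smaller coefficients (in the `nu` order),
the equation coefficient is `(λᵢ - λ^d)` times the unknown coefficient. -/
lemma dep (hr : r ≤ n)
    (φ : Fin n → MvPowerSeries (Fin n) F) (l : Fin n → F)
    (hconst : ∀ i, MvPowerSeries.coeff 0 (φ i) = 0)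
    (hdiag : ∀ i : Fin n, MvPowerSeries.coeff (Finsupp.single i 1) (φ i) = l i)
    (hoff : ∀ i j : Fin n, (j : ℕ) ≠ (i : ℕ) → (j : ℕ) ≠ (i : ℕ) + 1 →
      MvPowerSeries.coeff (Finsupp.single j 1) (φ i) = 0)
    {f g : Fin n → MvPowerSeries (Fin n) F} (hf : Sgood r f) (hg : Sgood r g)
    {i : Fin n} (hi : (i : ℕ) < r) {d : Fin n →₀ ℕ} (hd2 : 2 ≤ deg d)
    (hdu : ∀ k : Fin n, (k : ℕ) < r → d k = 0)
    (hagree : ∀ (j : Fin n) (e : Fin n →₀ ℕ), nu n r (j : ℕ) e < nu n r (i : ℕ) d →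
      MvPowerSeries.coeff e (f j) = MvPowerSeries.coeff e (g j)) :
    Ecoef φ i d f - Ecoef φ i d g =
      (l i - Lam l d) * (MvPowerSeries.coeff d (f i) - MvPowerSeries.coeff d (g i)) := by
  classical
  have hfc := hf.const0
  have hgc := hg.const0
  have hlow : ∀ (j : Fin n) (a : Fin n →₀ ℕ), deg a < deg d →
      MvPowerSeries.coeff a (f j) = MvPowerSeries.coeff a (g j) :=
    fun j a ha => hagree j a (nuA hr ha)
  -- Part 1 : the left-hand sides
  have part1 : MvPowerSeries.coeff d (mvComp (φ i) f)
      - MvPowerSeries.coeff d (mvComp (φ i) g)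
      = l i * (MvPowerSeries.coeff d (f i) - MvPowerSeries.coeff d (g i)) := by
    rw [coeff_mvComp, coeff_mvComp, ← Finset.sum_sub_distrib]
    rw [Finset.sum_eq_single_of_mem (Finsupp.single i 1)
      (mem_Iic_deg.mpr (fun j' => by rw [Finsupp.single_apply]; split <;> omega))]
    · rw [prod_pow_single, prod_pow_single, hdiag i, mul_sub]
    · intro e he hne
      rcases Nat.lt_or_ge (deg e) 2 with h2 | h2
      · interval_cases hde : deg e
        · rw [deg_eq_zero_iff.mp hde, prod_pow_zero, prod_pow_zero]
          exact sub_self _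
        · obtain ⟨j', rfl⟩ := exists_single_of_deg_one hde
          rw [prod_pow_single, prod_pow_single]
          rcases lt_or_ge (j' : ℕ) r with hjr | hjr
          · rcases eq_or_ne ((j' : ℕ)) ((i : ℕ) + 1) with hj1 | hj1
            · rw [hagree j' d (by rw [hj1]; exact nuB (by omega) (by omega))]
              exact sub_self _
            · have hji : (j' : ℕ) ≠ (i : ℕ) :=
                fun hc => hne (by rw [show j' = i from Fin.ext hc])
              rw [hoff i j' hji hj1, zero_mul, zero_mul]
              exact sub_self _
          · rw [hf.2 j' hjr, hg.2 j' hjr]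
            exact sub_self _
      · rw [prod_agree f g hfc hgc (deg e) (by omega) e rfl d
          (fun j a ha => hlow j a (by omega))]
        exact sub_self _
  -- Part 2 : the right-hand sides
  set ψf := fun j => mvComp (φ j) f with hψfdef
  set ψg := fun j => mvComp (φ j) g with hψgdef
  have hψf0 : ∀ j, MvPowerSeries.coeff 0 (ψf j) = 0 := fun j => by
    rw [hψfdef, mvComp_coeff_zero]; exact hconst j
  have hψg0 : ∀ j, MvPowerSeries.coeff 0 (ψg j) = 0 := fun j => by
    rw [hψgdef, mvComp_coeff_zero]; exact hconst j
  have hψagree : ∀ (j : Fin n) (a : Fin n →₀ ℕ), deg a < deg d →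
      MvPowerSeries.coeff a (ψf j) = MvPowerSeries.coeff a (ψg j) :=
    fun j a ha => mvComp_loc (φ j) f g hfc hgc a (fun j' a' ha' => hlow j' a' (by omega))
  have hB : ∀ j k : Fin n, (k : ℕ) ≠ (j : ℕ) → (k : ℕ) ≠ (j : ℕ) + 1 → Bmat r φ j k = 0 := by
    intro j k h1 h2
    rw [Bmat]
    split
    · exact hoff j k h1 h2
    · rfl
  have hψfL : ∀ e : Fin n →₀ ℕ, deg e = deg d →
      MvPowerSeries.coeff d (∏ j, ψf j ^ (e j)) =
        MvPowerSeries.coeff d (∏ j, (lin (Bmat r φ) j) ^ (e j)) := by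
    intro e he
    refine prod_agree ψf (lin (Bmat r φ)) hψf0 (coeff_lin_zero _) (deg e) (by omega) e rfl d
      (fun j a ha => ?_)
    have ha1 : deg a ≤ 1 := by omega
    interval_cases hda : deg a
    · rw [deg_eq_zero_iff.mp hda, hψf0 j, coeff_lin_zero]
    · obtain ⟨k, rfl⟩ := exists_single_of_deg_one hda
      simp only [hψfdef]
      rw [psi_lin hf (φ j) k, coeff_lin_single]
      simp only [Bmat]
  have part2 : MvPowerSeries.coeff d (mvComp (f i) ψf)
      - MvPowerSeries.coeff d (mvComp (g i) ψg)
      = Lam l d * (MvPowerSeries.coeff d (f i) - MvPowerSeries.coeff d (g i)) := by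
    rw [coeff_mvComp, coeff_mvComp, ← Finset.sum_sub_distrib]
    have step1 : ∀ e ∈ Finset.Iic (Finsupp.equivFunOnFinite.symm fun _ => d.sum fun _ v => v),
        MvPowerSeries.coeff e (f i) * MvPowerSeries.coeff d (∏ j, ψf j ^ (e j))
          - MvPowerSeries.coeff e (g i) * MvPowerSeries.coeff d (∏ j, ψg j ^ (e j))
        = (MvPowerSeries.coeff e (f i) - MvPowerSeries.coeff e (g i)) *
            MvPowerSeries.coeff d (∏ j, ψf j ^ (e j)) := by
      intro e he
      have hQ : MvPowerSeries.coeff e (g i) *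
          (MvPowerSeries.coeff d (∏ j, ψf j ^ (e j))
            - MvPowerSeries.coeff d (∏ j, ψg j ^ (e j))) = 0 := by
        rcases Nat.lt_or_ge (deg e) 2 with h2 | h2
        · interval_cases hde : deg e
          · rw [deg_eq_zero_iff.mp hde, (hg.1 i hi).1, zero_mul]
          · obtain ⟨k, rfl⟩ := exists_single_of_deg_one hde
            rw [(hg.1 i hi).2.1 k, zero_mul]
        · rw [prod_agree ψf ψg hψf0 hψg0 (deg e) (by omega) e rfl d
            (fun j a ha => hψagree j a (by omega)), sub_self, mul_zero]
      linear_combination hQ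
    rw [Finset.sum_congr rfl step1]
    rw [Finset.sum_eq_single_of_mem d (mem_Iic_deg.mpr (le_deg d))]
    · have hdiagval : MvPowerSeries.coeff d (∏ j, ψf j ^ (d j)) = Lam l d := by
        rw [hψfL d rfl, triang₂ (Bmat r φ) hB (deg d) d rfl, Lam]
        refine Finset.prod_congr rfl fun j _ => ?_
        rcases Nat.eq_zero_or_pos (d j) with h0 | h0
        · rw [h0, pow_zero, pow_zero]
        · have hjr : r ≤ (j : ℕ) := by
            by_contra hc; push_neg at hc
            rw [hdu j hc] at h0; omega
          rw [show Bmat r φ j j = l j from by rw [Bmat]; rw [if_pos hjr, hdiag j]]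
      rw [hdiagval, mul_comm]
    · intro e he hne
      rcases lt_trichotomy (deg e) (deg d) with hlt | heq | hgt
      · rw [hagree i e (nuA hr hlt), sub_self, zero_mul]
      · by_cases htouch : ∃ k : Fin n, (k : ℕ) < r ∧ e k ≠ 0
        · rw [(hf.1 i hi).2.2 e htouch, (hg.1 i hi).2.2 e htouch, sub_self, zero_mul]
        · rcases lt_or_ge (wt e) (wt d) with hw | hw
          · rw [hagree i e (nuC heq hw), sub_self, zero_mul]
          · have hP : MvPowerSeries.coeff d (∏ j, ψf j ^ (e j)) = 0 := by
              rw [hψfL e heq]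
              by_contra hc
              rcases triang₁ (Bmat r φ) hB (deg e) e rfl d hc with h1 | h1
              · omega
              · exact hne h1.symm
            rw [hP, mul_zero]
      · rw [ord_lemma ψf hψf0 (deg e) e rfl d hgt, mul_zero]
  rw [Ecoef, Ecoef]
  linear_combination part1 - part2

lemma Ecoef_zero (φ : Fin n → MvPowerSeries (Fin n) F)
    (hconst : ∀ i, MvPowerSeries.coeff 0 (φ i) = 0)
    {f : Fin n → MvPowerSeries (Fin n) F} (hf : Sgood r f) {i : Fin n} (hi : (i : ℕ) < r) :
    Ecoef φ i 0 f = 0 := by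
  rw [Ecoef, mvComp_coeff_zero, mvComp_coeff_zero, hconst i, (hf.1 i hi).1, sub_self]

lemma Ecoef_one (φ : Fin n → MvPowerSeries (Fin n) F) (l : Fin n → F)
    (hconst : ∀ i, MvPowerSeries.coeff 0 (φ i) = 0)
    (hoff : ∀ i j : Fin n, (j : ℕ) ≠ (i : ℕ) → (j : ℕ) ≠ (i : ℕ) + 1 →
      MvPowerSeries.coeff (Finsupp.single j 1) (φ i) = 0)
    (hjordan : ∀ i j : Fin n, (j : ℕ) = (i : ℕ) + 1 →
      MvPowerSeries.coeff (Finsupp.single j 1) (φ i) = 0 ∨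
      (MvPowerSeries.coeff (Finsupp.single j 1) (φ i) = 1 ∧ l i = l j))
    (hsemi : ∀ i : Fin n, (i : ℕ) < r → ∀ α : Fin n →₀ ℕ,
      (∀ j : Fin n, (j : ℕ) < r → α j = 0) → α ≠ 0 → l i ≠ ∏ j, l j ^ α j)
    {f : Fin n → MvPowerSeries (Fin n) F} (hf : Sgood r f) {i : Fin n} (hi : (i : ℕ) < r)
    {d : Fin n →₀ ℕ} (hd1 : deg d = 1) :
    Ecoef φ i d f = 0 := by
  classical
  obtain ⟨k, rfl⟩ := exists_single_of_deg_one hd1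
  have hψ0 : ∀ j, MvPowerSeries.coeff 0 (mvComp (φ j) f) = 0 := fun j => by
    rw [mvComp_coeff_zero]; exact hconst j
  have hR : MvPowerSeries.coeff (Finsupp.single k 1)
      (mvComp (f i) (fun j => mvComp (φ j) f)) = 0 := by
    rw [coeff_mvComp]
    refine Finset.sum_eq_zero fun e he => ?_
    rcases Nat.lt_or_ge (deg e) 2 with h2 | h2
    · interval_cases hde : deg e
      · rw [deg_eq_zero_iff.mp hde, (hf.1 i hi).1, zero_mul]
      · obtain ⟨j', rfl⟩ := exists_single_of_deg_one hde
        rw [(hf.1 i hi).2.1 j', zero_mul]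
    · rw [ord_lemma _ hψ0 (deg e) e rfl _ (by rw [deg_single]; omega), mul_zero]
  rw [Ecoef, hR, sub_zero, psi_lin hf (φ i) k]
  split
  · rename_i hrk
    rcases eq_or_ne ((k : ℕ)) ((i : ℕ) + 1) with h | h
    · rcases hjordan i k h with h0 | ⟨h1, h2⟩
      · exact h0
      · exfalso
        refine hsemi i hi (Finsupp.single k 1) (fun j hj => ?_) 
          (fun hc => one_ne_zero (Finsupp.single_eq_zero.mp hc)) ?_
        · rw [Finsupp.single_apply, if_neg]
          rintro rfl; omega
        · rw [h2]
          exact (prod_pow_single l k).symm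
    · exact hoff i k (by omega) h
  · rfl

lemma Ecoef_touch (φ : Fin n → MvPowerSeries (Fin n) F)
    {f : Fin n → MvPowerSeries (Fin n) F} (hf : Sgood r f) (i : Fin n)
    {d : Fin n →₀ ℕ} (hd : ∃ k : Fin n, (k : ℕ) < r ∧ d k ≠ 0) :
    Ecoef φ i d f = 0 := by
  have htf : ∀ (j : Fin n) (a : Fin n →₀ ℕ), (∃ k : Fin n, (k : ℕ) < r ∧ a k ≠ 0) →
      MvPowerSeries.coeff a (f j) = 0 := fun j a ha => hf.touch j a ha
  have htψ : ∀ (j : Fin n) (a : Fin n →₀ ℕ), (∃ k : Fin n, (k : ℕ) < r ∧ a k ≠ 0) →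
      MvPowerSeries.coeff a (mvComp (φ j) f) = 0 :=
    fun j a ha => mvComp_touch (φ j) f htf a ha
  rw [Ecoef, mvComp_touch (φ i) f htf d hd, mvComp_touch (f i) _ htψ d hd, sub_self]

/-- the recursively constructed coefficients. -/
noncomputable def cc {F : Type*} [Field F] {n : ℕ} (r : ℕ)
    (φ : Fin n → MvPowerSeries (Fin n) F) (l : Fin n → F)
    (i : Fin n) (d : Fin n →₀ ℕ) : F :=
  if H : (i : ℕ) < r ∧ 2 ≤ deg d ∧ (∀ k : Fin n, (k : ℕ) < r → d k = 0) then
    (l i - Lam l d)⁻¹ *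
      (0 - Ecoef φ i d (fun j => if (j : ℕ) < r then
        (fun e => if h : nu n r (j : ℕ) e < nu n r (i : ℕ) d then cc r φ l j e else 0)
        else MvPowerSeries.X j))
  else 0
termination_by nu n r (i : ℕ) d
decreasing_by exact h

/-- the truncation of the constructed tuple strictly below `nu i d`. -/
noncomputable def trunc {F : Type*} [Field F] {n : ℕ} (r : ℕ)
    (φ : Fin n → MvPowerSeries (Fin n) F) (l : Fin n → F)
    (i : Fin n) (d : Fin n →₀ ℕ) : Fin n → MvPowerSeries (Fin n) F :=
  fun j => if (j : ℕ) < r then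
    (fun e => if h : nu n r (j : ℕ) e < nu n r (i : ℕ) d then cc r φ l j e else 0)
    else MvPowerSeries.X j

/-- the constructed tuple. -/
noncomputable def ffun {F : Type*} [Field F] {n : ℕ} (r : ℕ)
    (φ : Fin n → MvPowerSeries (Fin n) F) (l : Fin n → F) :
    Fin n → MvPowerSeries (Fin n) F :=
  fun i => if (i : ℕ) < r then (fun d => cc r φ l i d) else MvPowerSeries.X i

lemma cc_eq {φ : Fin n → MvPowerSeries (Fin n) F} {l : Fin n → F} {i : Fin n} {d : Fin n →₀ ℕ}
    (H : (i : ℕ) < r ∧ 2 ≤ deg d ∧ (∀ k : Fin n, (k : ℕ) < r → d k = 0)) :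
    cc r φ l i d = (l i - Lam l d)⁻¹ * (0 - Ecoef φ i d (trunc r φ l i d)) := by
  rw [cc, dif_pos H]; rfl

lemma cc_zero {φ : Fin n → MvPowerSeries (Fin n) F} {l : Fin n → F} {i : Fin n} {d : Fin n →₀ ℕ}
    (H : ¬((i : ℕ) < r ∧ 2 ≤ deg d ∧ (∀ k : Fin n, (k : ℕ) < r → d k = 0))) :
    cc r φ l i d = 0 := by
  rw [cc, dif_neg H]

variable (r) in
lemma coeff_ffun_lt {φ : Fin n → MvPowerSeries (Fin n) F} {l : Fin n → F} {i : Fin n}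
    (hi : (i : ℕ) < r) (d : Fin n →₀ ℕ) :
    MvPowerSeries.coeff d (ffun r φ l i) = cc r φ l i d := by
  simp only [ffun, hi, if_true]
  rfl

variable (r) in
lemma ffun_ge {φ : Fin n → MvPowerSeries (Fin n) F} {l : Fin n → F} {i : Fin n}
    (hi : r ≤ (i : ℕ)) : ffun r φ l i = MvPowerSeries.X i := by
  simp only [ffun, not_lt.mpr hi, if_false]
  rfl

variable (r) in
lemma coeff_trunc_lt {φ : Fin n → MvPowerSeries (Fin n) F} {l : Fin n → F} {i j : Fin n}
    {d : Fin n →₀ ℕ} (hj : (j : ℕ) < r) (e : Fin n →₀ ℕ) :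
    MvPowerSeries.coeff e (trunc r φ l i d j) =
      if nu n r (j : ℕ) e < nu n r (i : ℕ) d then cc r φ l j e else 0 := by
  simp only [trunc, hj, if_true]
  rfl

variable (r) in
lemma trunc_ge {φ : Fin n → MvPowerSeries (Fin n) F} {l : Fin n → F} {i j : Fin n}
    {d : Fin n →₀ ℕ} (hj : r ≤ (j : ℕ)) : trunc r φ l i d j = MvPowerSeries.X j := by
  simp only [trunc, not_lt.mpr hj, if_false]
  rfl

lemma Sgood_ffun (r : ℕ) (φ : Fin n → MvPowerSeries (Fin n) F) (l : Fin n → F) :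
    Sgood r (ffun r φ l) := by
  constructor
  · intro i hi
    refine ⟨?_, fun j => ?_, fun d hd => ?_⟩
    · rw [coeff_ffun_lt r hi]
      exact cc_zero (by rintro ⟨-, h2, -⟩; rw [deg_zero] at h2; omega)
    · rw [coeff_ffun_lt r hi]
      exact cc_zero (by rintro ⟨-, h2, -⟩; rw [deg_single] at h2; omega)
    · rw [coeff_ffun_lt r hi]
      refine cc_zero ?_
      rintro ⟨-, -, hu⟩
      obtain ⟨k, hk, hk0⟩ := hd
      exact hk0 (hu k hk)
  · intro i hi
    exact ffun_ge r hi

lemma Sgood_trunc (r : ℕ) (φ : Fin n → MvPowerSeries (Fin n) F) (l : Fin n → F)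
    (i : Fin n) (d : Fin n →₀ ℕ) : Sgood r (trunc r φ l i d) := by
  constructor
  · intro j hj
    refine ⟨?_, fun k => ?_, fun e he => ?_⟩
    · rw [coeff_trunc_lt r hj]
      split
      · exact cc_zero (by rintro ⟨-, h2, -⟩; rw [deg_zero] at h2; omega)
      · rfl
    · rw [coeff_trunc_lt r hj]
      split
      · exact cc_zero (by rintro ⟨-, h2, -⟩; rw [deg_single] at h2; omega)
      · rfl
    · rw [coeff_trunc_lt r hj]
      split
      · refine cc_zero ?_
        rintro ⟨-, -, hu⟩
        obtain ⟨k, hk, hk0⟩ := he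
        exact hk0 (hu k hk)
      · rfl
  · intro j hj
    exact trunc_ge r hj

lemma agree_ffun_trunc (r : ℕ) (φ : Fin n → MvPowerSeries (Fin n) F) (l : Fin n → F)
    (i : Fin n) (d : Fin n →₀ ℕ) :
    ∀ (j : Fin n) (e : Fin n →₀ ℕ), nu n r (j : ℕ) e < nu n r (i : ℕ) d →
      MvPowerSeries.coeff e (ffun r φ l j) = MvPowerSeries.coeff e (trunc r φ l i d j) := by
  intro j e he
  rcases lt_or_ge (j : ℕ) r with hj | hj
  · rw [coeff_ffun_lt r hj, coeff_trunc_lt r hj, if_pos he]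
  · rw [ffun_ge r hj, trunc_ge r hj]

lemma Emain (hr : r ≤ n) (φ : Fin n → MvPowerSeries (Fin n) F) (l : Fin n → F)
    (hconst : ∀ i, MvPowerSeries.coeff 0 (φ i) = 0)
    (hdiag : ∀ i : Fin n, MvPowerSeries.coeff (Finsupp.single i 1) (φ i) = l i)
    (hoff : ∀ i j : Fin n, (j : ℕ) ≠ (i : ℕ) → (j : ℕ) ≠ (i : ℕ) + 1 →
      MvPowerSeries.coeff (Finsupp.single j 1) (φ i) = 0)
    (hsemi : ∀ i : Fin n, (i : ℕ) < r → ∀ α : Fin n →₀ ℕ,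
      (∀ j : Fin n, (j : ℕ) < r → α j = 0) → α ≠ 0 → l i ≠ ∏ j, l j ^ α j)
    {i : Fin n} (hi : (i : ℕ) < r) {d : Fin n →₀ ℕ} (hd2 : 2 ≤ deg d)
    (hdu : ∀ k : Fin n, (k : ℕ) < r → d k = 0) :
    Ecoef φ i d (ffun r φ l) = 0 := by
  have hd0 : d ≠ 0 := fun hc => by rw [hc, deg_zero] at hd2; omega
  have hΛ : l i ≠ Lam l d := hsemi i hi d hdu hd0
  have hne : l i - Lam l d ≠ 0 := sub_ne_zero.mpr hΛ
  have hdep := dep hr φ l hconst hdiag hoff (Sgood_ffun r φ l) (Sgood_trunc r φ l i d)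
    hi hd2 hdu (agree_ffun_trunc r φ l i d)
  rw [coeff_ffun_lt r hi, coeff_trunc_lt r hi, if_neg (lt_irrefl _),
    cc_eq ⟨hi, hd2, hdu⟩] at hdep
  have hsimp : (l i - Lam l d) * ((l i - Lam l d)⁻¹ *
      (0 - Ecoef φ i d (trunc r φ l i d)) - 0) = -(Ecoef φ i d (trunc r φ l i d)) := by
    field_simp
    ring
  linear_combination hdep + hsimp

lemma full_eq (hr : r ≤ n) (φ : Fin n → MvPowerSeries (Fin n) F) (l : Fin n → F)
    (hconst : ∀ i, MvPowerSeries.coeff 0 (φ i) = 0)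
    (hdiag : ∀ i : Fin n, MvPowerSeries.coeff (Finsupp.single i 1) (φ i) = l i)
    (hoff : ∀ i j : Fin n, (j : ℕ) ≠ (i : ℕ) → (j : ℕ) ≠ (i : ℕ) + 1 →
      MvPowerSeries.coeff (Finsupp.single j 1) (φ i) = 0)
    (hjordan : ∀ i j : Fin n, (j : ℕ) = (i : ℕ) + 1 →
      MvPowerSeries.coeff (Finsupp.single j 1) (φ i) = 0 ∨
      (MvPowerSeries.coeff (Finsupp.single j 1) (φ i) = 1 ∧ l i = l j))
    (hsemi : ∀ i : Fin n, (i : ℕ) < r → ∀ α : Fin n →₀ ℕ,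
      (∀ j : Fin n, (j : ℕ) < r → α j = 0) → α ≠ 0 → l i ≠ ∏ j, l j ^ α j)
    {f : Fin n → MvPowerSeries (Fin n) F} (hf : Sgood r f)
    (hE : ∀ (i : Fin n), (i : ℕ) < r → ∀ d : Fin n →₀ ℕ, 2 ≤ deg d →
      (∀ k : Fin n, (k : ℕ) < r → d k = 0) → Ecoef φ i d f = 0)
    {i : Fin n} (hi : (i : ℕ) < r) :
    mvComp (φ i) f = mvComp (f i) (fun j => mvComp (φ j) f) := by
  classical
  apply MvPowerSeries.ext
  intro d
  have hEd : Ecoef φ i d f = 0 := by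
    by_cases htouch : ∃ k : Fin n, (k : ℕ) < r ∧ d k ≠ 0
    · exact Ecoef_touch φ hf i htouch
    · push_neg at htouch
      have htouch' : ∀ k : Fin n, (k : ℕ) < r → d k = 0 := htouch
      rcases Nat.lt_or_ge (deg d) 2 with h2 | h2
      · interval_cases hdd : deg d
        · rw [deg_eq_zero_iff.mp hdd]
          exact Ecoef_zero φ hconst hf hi
        · exact Ecoef_one φ l hconst hoff hjordan hsemi hf hi hdd
      · exact hE i hi d h2 htouch'
  exact sub_eq_zero.mp hEd

lemma uniq (hr : r ≤ n) (φ : Fin n → MvPowerSeries (Fin n) F) (l : Fin n → F)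
    (hconst : ∀ i, MvPowerSeries.coeff 0 (φ i) = 0)
    (hdiag : ∀ i : Fin n, MvPowerSeries.coeff (Finsupp.single i 1) (φ i) = l i)
    (hoff : ∀ i j : Fin n, (j : ℕ) ≠ (i : ℕ) → (j : ℕ) ≠ (i : ℕ) + 1 →
      MvPowerSeries.coeff (Finsupp.single j 1) (φ i) = 0)
    (hsemi : ∀ i : Fin n, (i : ℕ) < r → ∀ α : Fin n →₀ ℕ,
      (∀ j : Fin n, (j : ℕ) < r → α j = 0) → α ≠ 0 → l i ≠ ∏ j, l j ^ α j)
    {g : Fin n → MvPowerSeries (Fin n) F} (hgS : Sgood r g)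
    (hg3 : ∀ i : Fin n, (i : ℕ) < r →
      mvComp (φ i) g = mvComp (g i) (fun j => mvComp (φ j) g)) :
    ∀ (N : ℕ) (i : Fin n) (d : Fin n →₀ ℕ), nu n r (i : ℕ) d < N →
      MvPowerSeries.coeff d (g i) = MvPowerSeries.coeff d (ffun r φ l i) := by
  intro N
  induction N with
  | zero => intro i d h; omega
  | succ N ih =>
    intro i d hN
    rcases Nat.lt_or_ge (nu n r (i : ℕ) d) N with hlt | hge
    · exact ih i d hlt
    rcases lt_or_ge (i : ℕ) r with hi | hi
    · by_cases H : 2 ≤ deg d ∧ (∀ k : Fin n, (k : ℕ) < r → d k = 0)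
      · have hEg : Ecoef φ i d g = 0 := by rw [Ecoef, hg3 i hi, sub_self]
        have hEf : Ecoef φ i d (ffun r φ l) = 0 :=
          Emain hr φ l hconst hdiag hoff hsemi hi H.1 H.2
        have hdep := dep hr φ l hconst hdiag hoff hgS (Sgood_ffun r φ l) hi H.1 H.2
          (fun j e he => ih j e (by omega))
        rw [hEg, hEf, sub_self] at hdep
        have hd0 : d ≠ 0 := fun hc => by
          have := H.1; rw [hc, deg_zero] at this; omega
        have hne : l i - Lam l d ≠ 0 := sub_ne_zero.mpr (hsemi i hi d H.2 hd0)
        have := (mul_eq_zero.mp hdep.symm).resolve_left hne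
        exact sub_eq_zero.mp this
      · have hff : MvPowerSeries.coeff d (ffun r φ l i) = 0 := by
          rw [coeff_ffun_lt r hi]
          exact cc_zero (fun HH => H ⟨HH.2.1, HH.2.2⟩)
        rw [hff]
        by_cases htouch : ∃ k : Fin n, (k : ℕ) < r ∧ d k ≠ 0
        · exact (hgS.1 i hi).2.2 d htouch
        · push_neg at htouch
          have h2 : deg d < 2 := by
            by_contra hc
            exact H ⟨by omega, htouch⟩
          interval_cases hdd : deg d
          · rw [deg_eq_zero_iff.mp hdd]
            exact (hgS.1 i hi).1
          · obtain ⟨k, rfl⟩ := exists_single_of_deg_one hdd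
            exact (hgS.1 i hi).2.1 k
    · rw [hgS.2 i hi, ffun_ge r hi]

end Stmt14aux

/-- Existence and uniqueness of the fixed formal subvariety `{xᵢ = fᵢ(x_{r+1},…,xₙ)}`:
if `φ = (φ₁,…,φₙ)` has zero constant terms, linear part in Jordan canonical form with
multipliers `λ₁,…,λₙ`, and each `λᵢ` (`i ≤ r`) is not in the multiplicative semigroup
generated by `λ_{r+1},…,λₙ`, then there are unique formal power series
`fᵢ(x_{r+1},…,xₙ)` (`i ≤ r`), with zero constant and linear terms, such that the formal
subvariety `xᵢ = fᵢ` is invariant: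
`φᵢ(f,x_{>r}) = fᵢ(φ_{r+1}(f,x_{>r}),…,φₙ(f,x_{>r}))`. -/
theorem stmt14 (F : Type*) [Field F] (n r : ℕ) (hr : r ≤ n)
    (φ : Fin n → MvPowerSeries (Fin n) F) (l : Fin n → F)
    (hconst : ∀ i, MvPowerSeries.coeff 0 (φ i) = 0)
    (hdiag : ∀ i : Fin n, MvPowerSeries.coeff (Finsupp.single i 1) (φ i) = l i)
    (hoff : ∀ i j : Fin n, (j : ℕ) ≠ (i : ℕ) → (j : ℕ) ≠ (i : ℕ) + 1 →
      MvPowerSeries.coeff (Finsupp.single j 1) (φ i) = 0)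
    (hjordan : ∀ i j : Fin n, (j : ℕ) = (i : ℕ) + 1 →
      MvPowerSeries.coeff (Finsupp.single j 1) (φ i) = 0 ∨
      (MvPowerSeries.coeff (Finsupp.single j 1) (φ i) = 1 ∧ l i = l j))
    (hsemi : ∀ i : Fin n, (i : ℕ) < r → ∀ α : Fin n →₀ ℕ,
      (∀ j : Fin n, (j : ℕ) < r → α j = 0) → α ≠ 0 → l i ≠ ∏ j, l j ^ α j) :
    ∃! f : Fin n → MvPowerSeries (Fin n) F,
      (∀ i : Fin n, (i : ℕ) < r →
          MvPowerSeries.coeff 0 (f i) = 0 ∧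
          (∀ j : Fin n, MvPowerSeries.coeff (Finsupp.single j 1) (f i) = 0) ∧
          (∀ d : Fin n →₀ ℕ, (∃ j : Fin n, (j : ℕ) < r ∧ d j ≠ 0) →
            MvPowerSeries.coeff d (f i) = 0)) ∧
      (∀ i : Fin n, r ≤ (i : ℕ) → f i = MvPowerSeries.X i) ∧
      (∀ i : Fin n, (i : ℕ) < r →
        mvComp (φ i) f = mvComp (f i) (fun j => mvComp (φ j) f)) := by
  classical
  refine ⟨Stmt14aux.ffun r φ l,
    ⟨(Stmt14aux.Sgood_ffun r φ l).1, (Stmt14aux.Sgood_ffun r φ l).2, fun i hi =>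
      Stmt14aux.full_eq hr φ l hconst hdiag hoff hjordan hsemi (Stmt14aux.Sgood_ffun r φ l)
        (fun i' hi' d hd2 hdu => Stmt14aux.Emain hr φ l hconst hdiag hoff hsemi hi' hd2 hdu)
        hi⟩, ?_⟩
  intro g hg
  obtain ⟨hg1, hg2, hg3⟩ := hg
  funext i
  apply MvPowerSeries.ext
  intro d
  exact Stmt14aux.uniq hr φ l hconst hdiag hoff hsemi ⟨hg1, hg2⟩ hg3
    (Stmt14aux.nu n r (i : ℕ) d + 1) i d (Nat.lt_succ_self _)
end

section
/- Let F be a complete nonarchimedean valued field and φ = (φ_1,…,φ_n) formal power series with zero constant terms and all coefficients of absolute value at most 1, whose linear part is diagonal with multipliers λ_1,…,λ_n satisfying |λ_i| < 1 for i ≤ r and |λ_i| = 1 for i > r. Suppose further that the subvariety V = {x_1 = ⋯ = x_r = 0} is invariant under φ (i.e. φ_i vanishes identically on V for i ≤ r). Then there exists 0 < c < 1 such that for every z = (z_1,…,z_n) with all |z_i| ≤ c and at least one z_i ≠ 0 for i ≤ r: max_{i ≤ r} |φ_{i,k}(z)| → 0 as k → ∞, where φ^k = (φ_{1,k},…,φ_{n,k})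 is the k-th iterate; in particular no such z is periodic. -/
lemma aux_single_of_sum_eq_one {n : ℕ} (d : Fin n →₀ ℕ) (h : ∑ j, d j = 1) :
    ∃ j, d = Finsupp.single j 1 := by
  obtain ⟨j, -, hj⟩ := Finset.exists_ne_zero_of_sum_ne_zero (s := Finset.univ)
    (f := fun j => d j) (by rw [h]; exact one_ne_zero)
  refine ⟨j, ?_⟩
  have hsplit : d j + ∑ k ∈ Finset.univ.erase j, d k = 1 := by
    rw [Finset.add_sum_erase _ _ (Finset.mem_univ j)]; exact h
  have hdj : d j = 1 := by omega
  have hz : ∑ k ∈ Finset.univ.erase j, d k = 0 := by omega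
  have herase := (Finset.sum_eq_zero_iff).1 hz
  ext k
  rcases eq_or_ne k j with rfl | hne
  · simp [hdj]
  · rw [Finsupp.single_apply, if_neg (by exact fun hh => hne hh.symm)]
    exact herase k (Finset.mem_erase.2 ⟨hne, Finset.mem_univ k⟩)

lemma aux_prod_pow_le {F : Type*} [NormedField F] {n : ℕ} (w : Fin n → F) {c : ℝ}
    (hw : ∀ k, ‖w k‖ ≤ c) (d : Fin n →₀ ℕ) {j : Fin n} (hj : d j ≠ 0)
    {B : ℝ} (hB : ‖w j‖ ≤ B) :
    ∏ k, ‖w k‖ ^ d k ≤ B * c ^ (∑ k, d k - 1) := by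
  have h0 : ∀ k, (0:ℝ) ≤ ‖w k‖ := fun k => norm_nonneg _
  have hc0 : (0:ℝ) ≤ c := le_trans (h0 j) (hw j)
  rw [← Finset.mul_prod_erase Finset.univ _ (Finset.mem_univ j)]
  have h1 : ‖w j‖ ^ d j ≤ B * c ^ (d j - 1) := by
    calc ‖w j‖ ^ d j = ‖w j‖ * ‖w j‖ ^ (d j - 1) := by
          rw [← pow_succ']; congr 1; omega
    _ ≤ B * c ^ (d j - 1) :=
        mul_le_mul hB (pow_le_pow_left₀ (h0 j) (hw j) _) (pow_nonneg (h0 j) _)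
          (le_trans (h0 j) hB)
  have h2 : ∏ k ∈ Finset.univ.erase j, ‖w k‖ ^ d k
      ≤ c ^ (∑ k ∈ Finset.univ.erase j, d k) := by
    rw [← Finset.prod_pow_eq_pow_sum]
    exact Finset.prod_le_prod (fun k _ => pow_nonneg (h0 k) _)
      (fun k _ => pow_le_pow_left₀ (h0 k) (hw k) _)
  calc ‖w j‖ ^ d j * ∏ k ∈ Finset.univ.erase j, ‖w k‖ ^ d k
      ≤ (B * c ^ (d j - 1)) * c ^ (∑ k ∈ Finset.univ.erase j, d k) :=
        mul_le_mul h1 h2 (Finset.prod_nonneg fun k _ => pow_nonneg (h0 k) _)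
          (mul_nonneg (le_trans (h0 j) hB) (pow_nonneg hc0 _))
    _ = B * c ^ (d j - 1 + ∑ k ∈ Finset.univ.erase j, d k) := by
        rw [mul_assoc, pow_add]
    _ = B * c ^ (∑ k, d k - 1) := by
        have := Finset.add_sum_erase Finset.univ (⇑d) (Finset.mem_univ j)
        congr 1
        congr 1
        omega



/-- Let `F` be complete nonarchimedean, and `φ = (φ₁,…,φₙ)` given by power series with
zero constant terms, coefficients of absolute value at most `1`, diagonal linear part
with multipliers `λᵢ` satisfying `‖λᵢ‖ < 1` for `i < r` and `‖λᵢ‖ = 1` for `i ≥ r`, and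
with `V = {x₁ = ⋯ = x_r = 0}` invariant (every monomial of `φᵢ`, `i < r`, involves some
`x_j`, `j < r`).  Then there is `0 < c < 1` such that every `z` in the closed polydisk of
radius `c` with some `zᵢ ≠ 0`, `i < r`, is attracted to `V` (the coordinates `i < r` of
the iterates tend to `0`); in particular no such `z` is periodic. -/
theorem stmt15 (F : Type*) [NontriviallyNormedField F] [IsUltrametricDist F]
    [CompleteSpace F] (n r : ℕ) (hr : r ≤ n)
    (a : Fin n → (Fin n →₀ ℕ) → F) (l : Fin n → F)
    (hbd : ∀ i d, ‖a i d‖ ≤ 1)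
    (hconst : ∀ i, a i 0 = 0)
    (hlin : ∀ i j : Fin n, a i (Finsupp.single j 1) = if j = i then l i else 0)
    (hattr : ∀ i : Fin n, (i : ℕ) < r → ‖l i‖ < 1)
    (hindiff : ∀ i : Fin n, r ≤ (i : ℕ) → ‖l i‖ = 1)
    (hinv : ∀ i : Fin n, (i : ℕ) < r → ∀ d : Fin n →₀ ℕ,
      (∀ j : Fin n, (j : ℕ) < r → d j = 0) → a i d = 0)
    (φ : (Fin n → F) → (Fin n → F))
    (hφ : ∀ z : Fin n → F, (∀ j, ‖z j‖ < 1) →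
      ∀ i, φ z i = ∑' d : Fin n →₀ ℕ, a i d * ∏ j, z j ^ d j) :
    ∃ c : ℝ, 0 < c ∧ c < 1 ∧
      ∀ z : Fin n → F, (∀ j, ‖z j‖ ≤ c) → (∃ i : Fin n, (i : ℕ) < r ∧ z i ≠ 0) →
        (∀ i : Fin n, (i : ℕ) < r →
          Filter.Tendsto (fun k => ‖φ^[k] z i‖) Filter.atTop (nhds 0)) ∧
        (∀ k : ℕ, 0 < k → φ^[k] z ≠ z) := by
  classical
  refine ⟨1/2, by norm_num, by norm_num, ?_⟩
  rintro z hz ⟨i0, hi0r, hi0⟩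
  set S : Finset (Fin n) := Finset.univ.filter (fun i => (i:ℕ) < r) with hSdef
  have hmemS : ∀ i : Fin n, i ∈ S ↔ (i:ℕ) < r := by intro i; simp [hSdef]
  have hi0S : i0 ∈ S := (hmemS i0).2 hi0r
  have hSne : S.Nonempty := ⟨i0, hi0S⟩
  set lam : ℝ := S.sup' hSne (fun i => ‖l i‖) with hlamdef
  have hlam1 : lam < 1 := by
    rw [hlamdef, Finset.sup'_lt_iff]
    intro i hi; exact hattr i ((hmemS i).1 hi)
  set q : ℝ := max lam (1/2) with hqdef
  have hq1 : q < 1 := max_lt hlam1 (by norm_num)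
  have hq0 : (0:ℝ) ≤ q := le_trans (by norm_num) (le_max_right _ _)
  set M : ℝ := S.sup' hSne (fun i => ‖z i‖) with hMdef
  have hM0 : (0:ℝ) ≤ M := le_trans (norm_nonneg _) (Finset.le_sup' (fun i => ‖z i‖) hi0S)
  -- single step estimate
  have step : ∀ (w : Fin n → F) (B : ℝ), 0 ≤ B →
      (∀ j, ‖w j‖ ≤ 1/2) → (∀ i ∈ S, ‖w i‖ ≤ B) →
      (∀ j, ‖φ w j‖ ≤ 1/2) ∧ (∀ i ∈ S, ‖φ w i‖ ≤ q * B) := by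
    intro w B hB hw hwS
    have hw1 : ∀ j, ‖w j‖ < 1 := fun j => lt_of_le_of_lt (hw j) (by norm_num)
    have hterm : ∀ (i : Fin n) (d : Fin n →₀ ℕ),
        ‖a i d * ∏ m, w m ^ d m‖ = ‖a i d‖ * ∏ m, ‖w m‖ ^ d m := by
      intro i d
      rw [norm_mul, norm_prod]
      congr 1
      exact Finset.prod_congr rfl fun m _ => norm_pow _ _
    have hpnn : ∀ d : Fin n →₀ ℕ, (0:ℝ) ≤ ∏ m, ‖w m‖ ^ d m :=
      fun d => Finset.prod_nonneg fun m _ => pow_nonneg (norm_nonneg _) _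
    constructor
    · intro j
      rw [hφ w hw1 j]
      apply IsUltrametricDist.norm_tsum_le_of_forall_le_of_nonneg (by norm_num)
      intro d
      rcases eq_or_ne d 0 with rfl | hd
      · simp [hconst]
      · obtain ⟨k, hk⟩ : ∃ k, d k ≠ 0 := by
          by_contra h; push_neg at h; exact hd (Finsupp.ext h)
        have hp := aux_prod_pow_le w hw d hk (hw k)
        have h12 : ((1:ℝ)/2) ^ (∑ m, d m - 1) ≤ 1 :=
          pow_le_one₀ (by norm_num) (by norm_num)
        rw [hterm j d]
        calc ‖a j d‖ * ∏ m, ‖w m‖ ^ d m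
            ≤ 1 * (1/2 * ((1:ℝ)/2) ^ (∑ m, d m - 1)) :=
              mul_le_mul (hbd j d) hp (hpnn d) one_pos.le
          _ ≤ 1/2 := by nlinarith
    · intro i hiS
      rw [hφ w hw1 i]
      apply IsUltrametricDist.norm_tsum_le_of_forall_le_of_nonneg (mul_nonneg hq0 hB)
      intro d
      rcases Nat.lt_or_ge (∑ m, d m) 2 with hD | hD
      · interval_cases hD2 : (∑ m, d m)
        · -- degree 0
          have hd0 : d = 0 := by
            ext m
            exact (Finset.sum_eq_zero_iff).1 hD2 m (Finset.mem_univ m)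
          rw [hd0, hconst i]
          simpa using mul_nonneg hq0 hB
        · -- degree 1
          obtain ⟨j, rfl⟩ := aux_single_of_sum_eq_one d hD2
          have hprod : ∏ m, w m ^ ((Finsupp.single j 1) m) = w j := by
            rw [Finset.prod_eq_single j]
            · simp
            · intro b _ hb
              rw [Finsupp.single_apply, if_neg (fun hh => hb hh.symm), pow_zero]
            · simp
          rw [hprod, hlin i j]
          rcases eq_or_ne j i with rfl | hne
          · rw [if_pos rfl, norm_mul]
            have hl : ‖l j‖ ≤ lam := Finset.le_sup' (fun i => ‖l i‖) hiS
            calc ‖l j‖ * ‖w j‖ ≤ lam * B :=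
                  mul_le_mul hl (hwS j hiS) (norm_nonneg _)
                    (le_trans (norm_nonneg _) hl)
              _ ≤ q * B := mul_le_mul_of_nonneg_right (le_max_left _ _) hB
          · rw [if_neg hne]
            simpa using mul_nonneg hq0 hB
      · -- degree ≥ 2
        by_cases ha : a i d = 0
        · rw [ha]
          simpa using mul_nonneg hq0 hB
        · obtain ⟨j, hjr, hjd⟩ : ∃ j : Fin n, (j:ℕ) < r ∧ d j ≠ 0 := by
            by_contra h
            push_neg at h
            exact ha (hinv i ((hmemS i).1 hiS) d h)
          have hjS : j ∈ S := (hmemS j).2 hjr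
          have hp := aux_prod_pow_le w hw d hjd (hwS j hjS)
          have h12 : ((1:ℝ)/2) ^ (∑ m, d m - 1) ≤ 1/2 := by
            calc ((1:ℝ)/2) ^ (∑ m, d m - 1) ≤ ((1:ℝ)/2) ^ 1 :=
                  pow_le_pow_of_le_one (by norm_num) (by norm_num) (by omega)
              _ = 1/2 := pow_one _
          rw [hterm i d]
          have h1 : ‖a i d‖ * ∏ m, ‖w m‖ ^ d m ≤ 1 * (B * ((1:ℝ)/2) ^ (∑ m, d m - 1)) :=
            mul_le_mul (hbd i d) hp (hpnn d) one_pos.le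
          have h2 : (1:ℝ)/2 ≤ q := le_max_right _ _
          nlinarith [pow_nonneg (by norm_num : (0:ℝ) ≤ 1/2) (∑ m, d m - 1)]
  -- iterate
  have key : ∀ k : ℕ, (∀ j, ‖φ^[k] z j‖ ≤ 1/2) ∧ (∀ i ∈ S, ‖φ^[k] z i‖ ≤ q ^ k * M) := by
    intro k
    induction k with
    | zero =>
      refine ⟨by simpa using hz, ?_⟩
      intro i hi
      simp only [Function.iterate_zero, id_eq, pow_zero, one_mul]
      exact Finset.le_sup' (fun i => ‖z i‖) hi
    | succ k ih =>
      have hs := step (φ^[k] z) (q ^ k * M) (mul_nonneg (pow_nonneg hq0 _) hM0) ih.1 ih.2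
      constructor
      · intro j
        rw [Function.iterate_succ_apply']
        exact hs.1 j
      · intro i hi
        rw [Function.iterate_succ_apply']
        calc ‖φ (φ^[k] z) i‖ ≤ q * (q ^ k * M) := hs.2 i hi
          _ = q ^ (k+1) * M := by ring
  constructor
  · intro i hir
    have hiS : i ∈ S := (hmemS i).2 hir
    have htend : Filter.Tendsto (fun k : ℕ => q ^ k * M) Filter.atTop (nhds 0) := by
      simpa using (tendsto_pow_atTop_nhds_zero_of_lt_one hq0 hq1).mul_const M
    exact squeeze_zero (fun k => norm_nonneg _) (fun k => (key k).2 i hiS) htend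
  · intro k hk heq
    have hMpos : 0 < M :=
      lt_of_lt_of_le (norm_pos_iff.2 hi0) (Finset.le_sup' (fun i => ‖z i‖) hi0S)
    have h1 : M ≤ q ^ k * M := by
      apply Finset.sup'_le
      intro i hi
      have := (key k).2 i hi
      rwa [heq] at this
    have h2 : q ^ k < 1 := pow_lt_one₀ hq0 hq1 hk.ne'
    nlinarith
end
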